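/- (Bias bound for the isotropic ES gradient estimator, explicit constants.) The one-sample antithetic ES gradient estimator satisfies ‖E_{g~N(0,I_d)}[z_ES(g)] − ∇F(θ)‖ ≤ 3·τ·σ²·d². -/

import Mathlib

open MeasureTheory ProbabilityTheory
open scoped RealInnerProductSpace

/-- The standard Gaussian measure `N(0, I_n)` on `ℝ^n`. -/
noncomputable def stdGaussian (n : ℕ) : Measure (EuclideanSpace ℝ (Fin n)) :=
  Measure.map (WithLp.toLp 2) (Measure.pi (fun _ => gaussianReal 0 1))

section ESAux

open Real Nat MeasureTheory.Measure
open scoped ENNReal NNReal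


lemma pow_le_fact_mul_exp (n : ℕ) (x : ℝ) (hx : 0 ≤ x) : x ^ n ≤ (n ! : ℝ) * exp x := by
  have h1 : x ^ n / (n ! : ℝ) ≤ ∑ i ∈ Finset.range (n+1), x ^ i / i ! := by
    refine Finset.single_le_sum (f := fun i => x ^ i / (i ! : ℝ)) ?_ (Finset.self_mem_range_succ n)
    intro i _
    positivity
  have h2 := Real.sum_le_exp_of_nonneg hx (n+1)
  have hfact : (0:ℝ) < (n ! : ℝ) := by positivity
  calc x ^ n = (x ^ n / (n ! : ℝ)) * (n ! : ℝ) := by field_simp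
    _ ≤ exp x * (n ! : ℝ) := mul_le_mul_of_nonneg_right (h1.trans h2) hfact.le
    _ = (n ! : ℝ) * exp x := mul_comm _ _

lemma integrable_abs_pow_mul_gauss (n : ℕ) :
    Integrable (fun x : ℝ => |x| ^ n * exp (-(x ^ 2) / 2)) := by
  have hint : Integrable (fun x : ℝ => ((n ! : ℝ) * exp 2) * exp (-(8⁻¹:ℝ) * x ^ 2)) :=
    (integrable_exp_neg_mul_sq (by norm_num : (0:ℝ) < 8⁻¹)).const_mul _
  refine hint.mono' ?_ ?_
  · exact ((continuous_abs.pow n).mul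
      (Real.continuous_exp.comp (by continuity))).aestronglyMeasurable
  · refine Filter.Eventually.of_forall fun x => ?_
    have h0 : 0 ≤ |x| ^ n * exp (-(x ^ 2) / 2) := by positivity
    rw [Real.norm_of_nonneg h0]
    have h1 : |x| ^ n ≤ (n ! : ℝ) * exp |x| := pow_le_fact_mul_exp n |x| (abs_nonneg x)
    have h2 : |x| ^ n * exp (-(x ^ 2) / 2) ≤ (n ! : ℝ) * exp |x| * exp (-(x ^ 2) / 2) :=
      mul_le_mul_of_nonneg_right h1 (exp_pos _).le
    refine h2.trans ?_
    rw [mul_assoc, mul_assoc, ← Real.exp_add, ← Real.exp_add]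
    refine mul_le_mul_of_nonneg_left (Real.exp_le_exp.mpr ?_) (by positivity)
    nlinarith [sq_nonneg (|x| - 4), sq_abs x]

lemma integrable_pow_mul_gauss (n : ℕ) :
    Integrable (fun x : ℝ => x ^ n * exp (-(x ^ 2) / 2)) := by
  refine (integrable_abs_pow_mul_gauss n).mono' ?_ ?_
  · exact ((continuous_pow n).mul (Real.continuous_exp.comp (by continuity))).aestronglyMeasurable
  · refine Filter.Eventually.of_forall fun x => ?_
    rw [Real.norm_eq_abs, abs_mul, abs_pow, abs_of_nonneg (exp_pos _).le]

lemma hasDerivAt_gauss (x : ℝ) :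
    HasDerivAt (fun x : ℝ => exp (-(x ^ 2) / 2)) (-x * exp (-(x ^ 2) / 2)) x := by
  have h : HasDerivAt (fun x : ℝ => -(x ^ 2) / 2) (-x) x := by
    have := ((hasDerivAt_pow 2 x).neg.div_const 2)
    refine this.congr_deriv ?_
    simp; ring
  simpa [mul_comm] using h.exp

lemma M0 : ∫ x : ℝ, exp (-(x ^ 2) / 2) = Real.sqrt (2 * π) := by
  have := integral_gaussian (2⁻¹ : ℝ)
  simp_rw [show ∀ x : ℝ, -(2⁻¹:ℝ) * x ^ 2 = -(x ^ 2) / 2 from fun x => by ring] at this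
  rw [this]; congr 1; ring

lemma M1 : ∫ x : ℝ, x * exp (-(x ^ 2) / 2) = 0 := by
  have hf' : Integrable (fun x : ℝ => -x * exp (-(x ^ 2) / 2)) := by
    refine (integrable_pow_mul_gauss 1).neg.congr
      (Filter.Eventually.of_forall fun x => ?_)
    simp [neg_mul]
  have h := integral_eq_zero_of_hasDerivAt_of_integrable
    (fun x => hasDerivAt_gauss x) hf'
    (by simpa using integrable_pow_mul_gauss 0)
  have h2 : ∫ x : ℝ, -(x * exp (-(x ^ 2) / 2)) = 0 := by
    rw [← h]; congr 1; funext x; ring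
  rw [integral_neg] at h2; linarith

lemma M2 : ∫ x : ℝ, x ^ 2 * exp (-(x ^ 2) / 2) = Real.sqrt (2 * π) := by
  have hderiv : ∀ x : ℝ, HasDerivAt (fun x : ℝ => x * exp (-(x ^ 2) / 2))
      (exp (-(x ^ 2) / 2) - x ^ 2 * exp (-(x ^ 2) / 2)) x := by
    intro x
    have := (hasDerivAt_id x).mul (hasDerivAt_gauss x)
    refine this.congr_deriv ?_
    simp; ring
  have hf' : Integrable (fun x : ℝ => exp (-(x ^ 2) / 2) - x ^ 2 * exp (-(x ^ 2) / 2)) := by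
    have h0 : Integrable (fun x : ℝ => exp (-(x ^ 2) / 2)) := by
      simpa using integrable_pow_mul_gauss 0
    exact h0.sub (integrable_pow_mul_gauss 2)
  have hf : Integrable (fun x : ℝ => x * exp (-(x ^ 2) / 2)) := by
    refine (integrable_pow_mul_gauss 1).congr (Filter.Eventually.of_forall fun x => by simp)
  have h := integral_eq_zero_of_hasDerivAt_of_integrable hderiv hf' hf
  rw [integral_sub (by simpa using integrable_pow_mul_gauss 0) (integrable_pow_mul_gauss 2)] at h
  have h0 : ∫ x : ℝ, exp (-(x ^ 2) / 2) = Real.sqrt (2 * π) := M0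
  linarith

lemma M4 : ∫ x : ℝ, x ^ 4 * exp (-(x ^ 2) / 2) = 3 * Real.sqrt (2 * π) := by
  have hderiv : ∀ x : ℝ, HasDerivAt (fun x : ℝ => x ^ 3 * exp (-(x ^ 2) / 2))
      (3 * (x ^ 2 * exp (-(x ^ 2) / 2)) - x ^ 4 * exp (-(x ^ 2) / 2)) x := by
    intro x
    have := (hasDerivAt_pow 3 x).mul (hasDerivAt_gauss x)
    refine this.congr_deriv ?_
    simp; ring
  have hf' : Integrable (fun x : ℝ =>
      3 * (x ^ 2 * exp (-(x ^ 2) / 2)) - x ^ 4 * exp (-(x ^ 2) / 2)) :=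
    ((integrable_pow_mul_gauss 2).const_mul 3).sub (integrable_pow_mul_gauss 4)
  have h := integral_eq_zero_of_hasDerivAt_of_integrable hderiv hf' (integrable_pow_mul_gauss 3)
  rw [integral_sub ((integrable_pow_mul_gauss 2).const_mul 3) (integrable_pow_mul_gauss 4),
    integral_const_mul, M2] at h
  linarith

lemma gaussianReal_eq_withDensity :
    gaussianReal 0 1 = volume.withDensity
      (fun x => ((gaussianPDFReal 0 1 x).toNNReal : ℝ≥0∞)) := by
  rw [gaussianReal_of_var_ne_zero 0 one_ne_zero]
  rfl

lemma pdf_eq (x : ℝ) : gaussianPDFReal 0 1 x = (Real.sqrt (2 * π))⁻¹ * exp (-(x ^ 2) / 2) := by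
  simp [gaussianPDFReal]

lemma meas_pdf : Measurable fun x => (gaussianPDFReal 0 1 x).toNNReal :=
  (measurable_gaussianPDFReal 0 1).real_toNNReal

lemma integral_gaussianReal (f : ℝ → ℝ) :
    ∫ x, f x ∂(gaussianReal 0 1)
      = (Real.sqrt (2 * π))⁻¹ * ∫ x, exp (-(x ^ 2) / 2) * f x := by
  rw [gaussianReal_eq_withDensity, integral_withDensity_eq_integral_smul meas_pdf,
    ← integral_const_mul]
  congr 1; funext x
  rw [NNReal.smul_def, Real.coe_toNNReal _ (gaussianPDFReal_nonneg 0 1 x), pdf_eq]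
  simp [smul_eq_mul]; ring

lemma integrable_pow_gaussianReal (n : ℕ) :
    Integrable (fun x : ℝ => x ^ n) (gaussianReal 0 1) := by
  rw [gaussianReal_eq_withDensity, integrable_withDensity_iff_integrable_smul meas_pdf]
  have haux : Integrable (fun x : ℝ => (Real.sqrt (2 * π))⁻¹ * (|x| ^ n * exp (-(x ^ 2) / 2))) :=
    (integrable_abs_pow_mul_gauss n).const_mul _
  refine haux.mono' ?_ ?_
  · refine Continuous.aestronglyMeasurable ?_
    have : Continuous fun x : ℝ => gaussianPDFReal 0 1 x := by
      simp_rw [pdf_eq]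
      exact continuous_const.mul (Real.continuous_exp.comp (by continuity))
    exact (((continuous_real_toNNReal.comp this).subtype_val).smul (continuous_pow n) : _)
  · refine Filter.Eventually.of_forall fun x => ?_
    rw [NNReal.smul_def, Real.coe_toNNReal _ (gaussianPDFReal_nonneg 0 1 x), pdf_eq, smul_eq_mul]
    rw [Real.norm_eq_abs, abs_mul, abs_mul, abs_of_nonneg (exp_pos _).le,
      abs_of_nonneg (by positivity : (0:ℝ) ≤ (Real.sqrt (2*π))⁻¹), abs_pow]
    exact le_of_eq (by ring)

lemma Gm1 : ∫ x : ℝ, x ∂(gaussianReal 0 1) = 0 := by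
  rw [integral_gaussianReal]
  simp_rw [mul_comm (exp _)]
  rw [M1, mul_zero]

lemma Gm2 : ∫ x : ℝ, x ^ 2 ∂(gaussianReal 0 1) = 1 := by
  rw [integral_gaussianReal]
  simp_rw [mul_comm (exp _)]
  rw [M2, inv_mul_cancel₀ (by positivity)]

lemma Gm4 : ∫ x : ℝ, x ^ 4 ∂(gaussianReal 0 1) = 3 := by
  rw [integral_gaussianReal]
  simp_rw [mul_comm (exp _)]
  rw [M4]
  rw [show (Real.sqrt (2*π))⁻¹ * (3 * Real.sqrt (2*π)) = 3 * ((Real.sqrt (2*π))⁻¹ * Real.sqrt (2*π)) by ring,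
    inv_mul_cancel₀ (by positivity), mul_one]


theorem my_integrable_pi_prod {n : ℕ} (γ : Measure ℝ) [SigmaFinite γ] {f : Fin n → ℝ → ℝ}
    (hf : ∀ i, Integrable (f i) γ) :
    Integrable (fun x : Fin n → ℝ => ∏ i, f i (x i)) (Measure.pi fun _ => γ) := by
  induction n with
  | zero => simp only [Finset.univ_eq_empty, Finset.prod_empty,
      integrable_const_iff, one_ne_zero, pi_empty_univ, ENNReal.one_lt_top, or_true]
            exact Or.inr (by rw [Measure.pi_of_empty]; infer_instance)
  | succ n n_ih =>
      have := ((measurePreserving_piFinSuccAbove (fun _ : Fin (n+1) => γ) 0).symm)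
      rw [← this.integrable_comp_emb (MeasurableEquiv.measurableEmbedding _)]
      simp_rw [MeasurableEquiv.piFinSuccAbove_symm_apply, Fin.insertNthEquiv,
        Fin.prod_univ_succ, Fin.insertNth_zero]
      simp only [Fin.zero_succAbove, cast_eq, Function.comp_def, Fin.cons_zero, Fin.cons_succ]
      have h2 : Integrable (fun (x : Fin n → ℝ) ↦ ∏ j, f (Fin.succ j) (x j))
          (Measure.pi fun _ => γ) := n_ih (fun i ↦ hf _)
      exact Integrable.mul_prod (hf 0) h2

theorem my_integral_pi_prod {n : ℕ} (γ : Measure ℝ) [SigmaFinite γ] (f : Fin n → ℝ → ℝ) :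
    ∫ x : Fin n → ℝ, ∏ i, f i (x i) ∂(Measure.pi fun _ => γ) = ∏ i, ∫ x, f i x ∂γ := by
  induction n with
  | zero =>
      simp only [Finset.univ_eq_empty, Finset.prod_empty, integral_const,
        pi_empty_univ, ENNReal.toReal_one, smul_eq_mul, mul_one, pow_zero, one_smul]
      simp [Measure.real]
  | succ n n_ih =>
      calc
        _ = ∫ x : ℝ × (Fin n → ℝ),
            f 0 x.1 * ∏ i : Fin n, f (Fin.succ i) (x.2 i) ∂(γ.prod (Measure.pi fun _ => γ)) := by
          rw [← ((measurePreserving_piFinSuccAbove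
            (fun _ : Fin (n+1) => γ) 0).symm).integral_comp']
          simp_rw [MeasurableEquiv.piFinSuccAbove_symm_apply, Fin.insertNthEquiv,
            Fin.prod_univ_succ, Fin.insertNth_zero]
          simp only [Fin.zero_succAbove, cast_eq, Function.comp_def, Fin.cons_zero, Fin.cons_succ,
            Equiv.coe_fn_mk]
        _ = (∫ x, f 0 x ∂γ) * ∏ i : Fin n, ∫ x : ℝ, f (Fin.succ i) x ∂γ := by
          rw [← n_ih, ← integral_prod_mul]
        _ = ∏ i, ∫ x, f i x ∂γ := by rw [Fin.prod_univ_succ]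



variable {d : ℕ}

instance : IsProbabilityMeasure (stdGaussian d) :=
  Measure.isProbabilityMeasure_map (WithLp.measurable_toLp 2 _).aemeasurable

lemma intSingle (i : Fin d) (a : ℕ) :
    Integrable (fun g : EuclideanSpace ℝ (Fin d) => (g i) ^ a) (stdGaussian d) := by
  have h := my_integrable_pi_prod (n := d) (gaussianReal 0 1)
    (f := fun k => fun x : ℝ => x ^ (if k = i then a else 0))
    (fun k => integrable_pow_gaussianReal _)
  refine (integrable_map_equiv (MeasurableEquiv.toLp 2 (Fin d → ℝ)) _).mpr (h.congr ?_ : _)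
  refine Filter.Eventually.of_forall fun g => ?_
  show (∏ k, (g k) ^ (if k = i then a else 0)) = (g i) ^ a
  rw [Finset.prod_eq_single i (fun k _ hk => by simp [hk]) (by simp), if_pos rfl]

lemma momSingle (i : Fin d) (a : ℕ) :
    ∫ g : EuclideanSpace ℝ (Fin d), (g i) ^ a ∂(stdGaussian d)
      = ∫ x : ℝ, x ^ a ∂(gaussianReal 0 1) := by
  have h := my_integral_pi_prod (n := d) (gaussianReal 0 1)
    (fun k => fun x : ℝ => x ^ (if k = i then a else 0))
  have hl : ∫ g : EuclideanSpace ℝ (Fin d), (g i) ^ a ∂(stdGaussian d)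
      = ∫ x : Fin d → ℝ, ∏ k, (x k) ^ (if k = i then a else 0)
        ∂(Measure.pi fun _ => gaussianReal 0 1) := by
    rw [_root_.stdGaussian, ← MeasurableEquiv.coe_toLp, integral_map_equiv]
    refine integral_congr_ae (Filter.Eventually.of_forall fun g => ?_)
    show (g i) ^ a = ∏ k, (g k) ^ (if k = i then a else 0)
    rw [Finset.prod_eq_single i (fun k _ hk => by simp [hk]) (by simp), if_pos rfl]
  rw [hl, h, Finset.prod_eq_single i (fun k _ hk => by simp [hk]) (by simp), if_pos rfl]

lemma intPair {i j : Fin d} (hij : i ≠ j) (a b : ℕ) :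
    Integrable (fun g : EuclideanSpace ℝ (Fin d) => (g i) ^ a * (g j) ^ b) (stdGaussian d) := by
  have h := my_integrable_pi_prod (n := d) (gaussianReal 0 1)
    (f := fun k => fun x : ℝ => x ^ (if k = i then a else if k = j then b else 0))
    (fun k => integrable_pow_gaussianReal _)
  refine (integrable_map_equiv (MeasurableEquiv.toLp 2 (Fin d → ℝ)) _).mpr (h.congr ?_ : _)
  refine Filter.Eventually.of_forall fun g => ?_
  show (∏ k, (g k) ^ (if k = i then a else if k = j then b else 0)) = (g i) ^ a * (g j) ^ b
  have : ∀ g : Fin d → ℝ, ∏ k, (g k) ^ (if k = i then a else if k = j then b else 0)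
      = (g i) ^ a * (g j) ^ b := by
    intro g
    rw [← Finset.prod_filter_mul_prod_filter_not Finset.univ (fun k => k = i ∨ k = j)]
    have h1 : Finset.filter (fun k => k = i ∨ k = j) Finset.univ = {i, j} := by
      ext k; simp [Finset.mem_insert]
    rw [h1, Finset.prod_insert (by simp [hij]), Finset.prod_singleton,
      if_pos rfl, if_neg hij.symm, if_pos rfl]
    have h2 : ∏ k ∈ Finset.filter (fun k => ¬(k = i ∨ k = j)) Finset.univ,
        (g k) ^ (if k = i then a else if k = j then b else 0) = 1 := by
      refine Finset.prod_eq_one fun k hk => ?_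
      simp only [Finset.mem_filter, not_or] at hk
      rw [if_neg hk.2.1, if_neg hk.2.2, pow_zero]
    rw [h2, mul_one]
  exact this g

lemma momPair {i j : Fin d} (hij : i ≠ j) (a b : ℕ) :
    ∫ g : EuclideanSpace ℝ (Fin d), (g i) ^ a * (g j) ^ b ∂(stdGaussian d)
      = (∫ x : ℝ, x ^ a ∂(gaussianReal 0 1)) * (∫ x : ℝ, x ^ b ∂(gaussianReal 0 1)) := by
  have key : ∀ g : Fin d → ℝ, ∏ k, (g k) ^ (if k = i then a else if k = j then b else 0)
      = (g i) ^ a * (g j) ^ b := by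
    intro g
    rw [← Finset.prod_filter_mul_prod_filter_not Finset.univ (fun k => k = i ∨ k = j)]
    have h1 : Finset.filter (fun k => k = i ∨ k = j) Finset.univ = {i, j} := by
      ext k; simp [Finset.mem_insert]
    rw [h1, Finset.prod_insert (by simp [hij]), Finset.prod_singleton,
      if_pos rfl, if_neg hij.symm, if_pos rfl]
    have h2 : ∏ k ∈ Finset.filter (fun k => ¬(k = i ∨ k = j)) Finset.univ,
        (g k) ^ (if k = i then a else if k = j then b else 0) = 1 := by
      refine Finset.prod_eq_one fun k hk => ?_
      simp only [Finset.mem_filter, not_or] at hk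
      rw [if_neg hk.2.1, if_neg hk.2.2, pow_zero]
    rw [h2, mul_one]
  have h := my_integral_pi_prod (n := d) (gaussianReal 0 1)
    (fun k => fun x : ℝ => x ^ (if k = i then a else if k = j then b else 0))
  have hl : ∫ g : EuclideanSpace ℝ (Fin d), (g i) ^ a * (g j) ^ b ∂(stdGaussian d)
      = ∫ x : Fin d → ℝ, ∏ k, (x k) ^ (if k = i then a else if k = j then b else 0)
        ∂(Measure.pi fun _ => gaussianReal 0 1) := by
    rw [_root_.stdGaussian, ← MeasurableEquiv.coe_toLp, integral_map_equiv]
    refine integral_congr_ae (Filter.Eventually.of_forall fun g => ?_)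
    show (g i) ^ a * (g j) ^ b = ∏ k, (g k) ^ (if k = i then a else if k = j then b else 0)
    exact (key g).symm
  rw [hl, h]
  rw [show Finset.univ = insert i (insert j ((Finset.univ : Finset (Fin d)) \ {i, j})) from ?_]
  · rw [Finset.prod_insert, Finset.prod_insert]
    · have h2 : ∏ k ∈ (Finset.univ : Finset (Fin d)) \ {i, j},
          ∫ x : ℝ, x ^ (if k = i then a else if k = j then b else 0) ∂(gaussianReal 0 1) = 1 := by
        refine Finset.prod_eq_one fun k hk => ?_
        simp only [Finset.mem_sdiff, Finset.mem_insert, Finset.mem_singleton, not_or] at hk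
        rw [if_neg hk.2.1, if_neg hk.2.2]
        simp
      rw [h2, mul_one, if_pos rfl, if_neg hij.symm, if_pos rfl]
    · simp
    · simp [hij]
  · ext k
    simp only [Finset.mem_insert, Finset.mem_sdiff, Finset.mem_univ, Finset.mem_singleton,
      true_and, not_or]
    by_cases h1 : k = i
    · simp [h1]
    by_cases h2 : k = j
    · simp [h2]
    simp [h1, h2]


variable {d : ℕ}

lemma normsq_eq (g : EuclideanSpace ℝ (Fin d)) : ‖g‖ ^ 2 = ∑ i, (g i) ^ 2 := by
  rw [EuclideanSpace.norm_eq, Real.sq_sqrt (by positivity)]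
  simp [Real.norm_eq_abs, sq_abs]

lemma int_normsq : Integrable (fun g : EuclideanSpace ℝ (Fin d) => ‖g‖ ^ 2) (stdGaussian d) := by
  refine (integrable_finset_sum Finset.univ fun i _ => intSingle i 2).congr
    (Filter.Eventually.of_forall fun g => ?_)
  exact (normsq_eq g).symm

lemma norm4_eq (g : EuclideanSpace ℝ (Fin d)) :
    ‖g‖ ^ 4 = ∑ i, ∑ j, (g i) ^ 2 * (g j) ^ 2 := by
  have : ‖g‖ ^ 4 = (‖g‖ ^ 2) * (‖g‖ ^ 2) := by ring
  rw [this, normsq_eq, Finset.sum_mul_sum]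

lemma int_term4 (i j : Fin d) :
    Integrable (fun g : EuclideanSpace ℝ (Fin d) => (g i) ^ 2 * (g j) ^ 2) (stdGaussian d) := by
  by_cases hij : i = j
  · subst hij
    refine (intSingle i 4).congr (Filter.Eventually.of_forall fun g => ?_)
    ring
  · exact intPair hij 2 2

lemma int_norm4 : Integrable (fun g : EuclideanSpace ℝ (Fin d) => ‖g‖ ^ 4) (stdGaussian d) := by
  refine (integrable_finset_sum Finset.univ fun i _ =>
    integrable_finset_sum Finset.univ fun j _ => int_term4 i j).congr
    (Filter.Eventually.of_forall fun g => ?_)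
  exact (norm4_eq g).symm

lemma mom_norm4 :
    ∫ g : EuclideanSpace ℝ (Fin d), ‖g‖ ^ 4 ∂(stdGaussian d) = (d : ℝ) ^ 2 + 2 * d := by
  have h1 : ∫ g : EuclideanSpace ℝ (Fin d), ‖g‖ ^ 4 ∂(stdGaussian d)
      = ∑ i, ∑ j, ∫ g : EuclideanSpace ℝ (Fin d), (g i) ^ 2 * (g j) ^ 2 ∂(stdGaussian d) :=
    calc ∫ g : EuclideanSpace ℝ (Fin d), ‖g‖ ^ 4 ∂(stdGaussian d)
        = ∫ g : EuclideanSpace ℝ (Fin d), ∑ i, ∑ j, (g i) ^ 2 * (g j) ^ 2 ∂(stdGaussian d) :=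
          integral_congr_ae (Filter.Eventually.of_forall fun g => norm4_eq g)
      _ = ∑ i, ∫ g : EuclideanSpace ℝ (Fin d), ∑ j, (g i) ^ 2 * (g j) ^ 2 ∂(stdGaussian d) :=
          integral_finset_sum _ fun i _ => integrable_finset_sum Finset.univ fun j _ => int_term4 i j
      _ = ∑ i, ∑ j, ∫ g : EuclideanSpace ℝ (Fin d), (g i) ^ 2 * (g j) ^ 2 ∂(stdGaussian d) :=
          Finset.sum_congr rfl fun i _ => integral_finset_sum _ fun j _ => int_term4 i j
  have h2 : ∀ i j : Fin d, ∫ g : EuclideanSpace ℝ (Fin d), (g i) ^ 2 * (g j) ^ 2 ∂(stdGaussian d)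
      = if i = j then 3 else 1 := by
    intro i j
    by_cases hij : i = j
    · subst hij
      rw [if_pos rfl, ← Gm4, ← momSingle i 4]
      refine integral_congr_ae (Filter.Eventually.of_forall fun g => ?_)
      ring
    · rw [if_neg hij, momPair hij 2 2, Gm2, mul_one]
  rw [h1]
  simp_rw [h2]
  have h3 : ∀ i : Fin d, (∑ j, if i = j then (3:ℝ) else 1) = 2 + d := by
    intro i
    have : ∀ j : Fin d, (if i = j then (3:ℝ) else 1) = (if i = j then (2:ℝ) else 0) + 1 := by
      intro j; by_cases h : i = j <;> simp [h] <;> norm_num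
    simp_rw [this, Finset.sum_add_distrib, Finset.sum_ite_eq, if_pos (Finset.mem_univ i)]
    simp
  simp_rw [h3]
  simp only [Finset.sum_const, Finset.card_univ, Fintype.card_fin, nsmul_eq_mul]
  ring

lemma stein (a : EuclideanSpace ℝ (Fin d)) (h_int : Integrable
      (fun g : EuclideanSpace ℝ (Fin d) => (⟪g, a⟫ : ℝ) • g) (stdGaussian d)) :
    ∫ g : EuclideanSpace ℝ (Fin d), (⟪g, a⟫ : ℝ) • g ∂(stdGaussian d) = a := by
  have hterm : ∀ k i : Fin d, Integrable
      (fun g : EuclideanSpace ℝ (Fin d) => a k * (g k * g i)) (stdGaussian d) := by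
    intro k i
    by_cases hki : k = i
    · subst hki
      exact ((intSingle k 2).const_mul _).congr
        (Filter.Eventually.of_forall fun g => by ring)
    · exact ((intPair hki 1 1).const_mul _).congr
        (Filter.Eventually.of_forall fun g => by ring)
  have hcomp : ∀ i : Fin d,
      (∫ g : EuclideanSpace ℝ (Fin d), (⟪g, a⟫ : ℝ) • g ∂(stdGaussian d)) i = a i := by
    intro i
    have hproj := (EuclideanSpace.proj i (𝕜 := ℝ)).integral_comp_comm h_int
    have hlhs : (∫ g : EuclideanSpace ℝ (Fin d), (⟪g, a⟫ : ℝ) • g ∂(stdGaussian d)) i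
        = ∫ g : EuclideanSpace ℝ (Fin d),
            (EuclideanSpace.proj i (𝕜 := ℝ)) ((⟪g, a⟫ : ℝ) • g) ∂(stdGaussian d) := by
      rw [hproj]
      rfl
    rw [hlhs]
    have heval : ∀ g : EuclideanSpace ℝ (Fin d),
        (EuclideanSpace.proj i (𝕜 := ℝ)) ((⟪g, a⟫ : ℝ) • g) = ∑ k, a k * (g k * g i) := by
      intro g
      rw [show (EuclideanSpace.proj i (𝕜 := ℝ)) ((⟪g, a⟫ : ℝ) • g)
        = (⟪g, a⟫ : ℝ) * g i from rfl]
      rw [PiLp.inner_apply]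
      rw [Finset.sum_mul]
      refine Finset.sum_congr rfl fun k _ => ?_
      simp [RCLike.inner_apply]
      ring
    rw [integral_congr_ae (Filter.Eventually.of_forall heval),
      integral_finset_sum _ fun k _ => hterm k i]
    have hval : ∀ k : Fin d, ∫ g : EuclideanSpace ℝ (Fin d), a k * (g k * g i) ∂(stdGaussian d)
        = if k = i then a k else 0 := by
      intro k
      rw [integral_const_mul]
      by_cases hki : k = i
      · subst hki
        rw [if_pos rfl]
        have : ∫ g : EuclideanSpace ℝ (Fin d), g k * g k ∂(stdGaussian d) = 1 := by
          rw [← Gm2, ← momSingle k 2]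
          exact integral_congr_ae (Filter.Eventually.of_forall fun g => by ring)
        rw [this, mul_one]
      · rw [if_neg hki]
        have : ∫ g : EuclideanSpace ℝ (Fin d), g k * g i ∂(stdGaussian d) = 0 := by
          have := momPair hki 1 1
          simp only [pow_one] at this
          rw [this, Gm1, mul_zero]
        rw [this, mul_zero]
    simp_rw [hval]
    rw [Finset.sum_ite_eq' Finset.univ i (fun k => a k), if_pos (Finset.mem_univ i)]
  ext i
  exact hcomp i

end ESAux

/-- Bias bound for the isotropic ES gradient estimator, explicit constants. -/
theorem bias_bound_isotropic_ES
    (d : ℕ) (hd : 1 ≤ d) (L τ σ : ℝ) (hL : 0 < L) (hτ : 0 < τ) (hσ : 0 < σ)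
    (F : EuclideanSpace ℝ (Fin d) → ℝ)
    (hdiff : Differentiable ℝ F)
    (hlip : ∀ x y : EuclideanSpace ℝ (Fin d), |F x - F y| ≤ L * ‖x - y‖)
    (happrox : ∀ x g : EuclideanSpace ℝ (Fin d),
      |(F (x + σ • g) - F (x - σ • g)) / (2 * σ) - ⟪g, gradient F x⟫| ≤ τ * σ ^ 2 * ‖g‖ ^ 3)
    (θ : EuclideanSpace ℝ (Fin d))
    :
    ‖(∫ g, ((F (θ + σ • g) - F (θ - σ • g)) / (2 * σ)) • g ∂(stdGaussian d)) - gradient F θ‖ ≤ 3 * τ * σ ^ 2 * (d : ℝ) ^ 2 := by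
  set a := gradient F θ with ha
  set v : EuclideanSpace ℝ (Fin d) → ℝ :=
    fun g => (F (θ + σ • g) - F (θ - σ • g)) / (2 * σ) with hv
  have hv_cont : Continuous v := by
    have hs : Continuous fun g : EuclideanSpace ℝ (Fin d) => σ • g := by fun_prop
    refine Continuous.div_const ?_ _
    exact (hdiff.continuous.comp (continuous_const.add hs)).sub
      (hdiff.continuous.comp (continuous_const.sub hs))
  have hv_le : ∀ g : EuclideanSpace ℝ (Fin d), |v g| ≤ L * ‖g‖ := by
    intro g
    have h1 : |F (θ + σ • g) - F (θ - σ • g)| ≤ L * ‖(θ + σ • g) - (θ - σ • g)‖ := hlip _ _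
    have h2 : (θ + σ • g) - (θ - σ • g) = (2 * σ) • g := by
      rw [two_mul, add_smul]
      abel
    rw [h2, norm_smul, Real.norm_eq_abs, abs_of_pos (by linarith : (0:ℝ) < 2 * σ)] at h1
    rw [hv]
    rw [abs_div, abs_of_pos (by linarith : (0:ℝ) < 2 * σ), div_le_iff₀ (by linarith)]
    calc |F (θ + σ • g) - F (θ - σ • g)| ≤ L * (2 * σ * ‖g‖) := h1
      _ = L * ‖g‖ * (2 * σ) := by ring
  have hz_int : Integrable (fun g : EuclideanSpace ℝ (Fin d) => v g • g) (stdGaussian d) := by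
    refine (int_normsq.const_mul L).mono' ?_ ?_
    · exact (hv_cont.smul continuous_id).aestronglyMeasurable
    · refine Filter.Eventually.of_forall fun g => ?_
      rw [norm_smul, Real.norm_eq_abs]
      calc |v g| * ‖g‖ ≤ (L * ‖g‖) * ‖g‖ :=
            mul_le_mul_of_nonneg_right (hv_le g) (norm_nonneg g)
        _ = L * ‖g‖ ^ 2 := by ring
  have hw_int : Integrable (fun g : EuclideanSpace ℝ (Fin d) => (⟪g, a⟫ : ℝ) • g)
      (stdGaussian d) := by
    refine (int_normsq.const_mul ‖a‖).mono' ?_ ?_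
    · exact (by fun_prop : Continuous fun g : EuclideanSpace ℝ (Fin d) => (⟪g, a⟫ : ℝ) • g).aestronglyMeasurable
    · refine Filter.Eventually.of_forall fun g => ?_
      rw [norm_smul, Real.norm_eq_abs]
      calc |(⟪g, a⟫ : ℝ)| * ‖g‖ ≤ (‖g‖ * ‖a‖) * ‖g‖ :=
            mul_le_mul_of_nonneg_right (abs_real_inner_le_norm g a) (norm_nonneg g)
        _ = ‖a‖ * ‖g‖ ^ 2 := by ring
  have hkey : (∫ g, v g • g ∂(stdGaussian d)) - a
      = ∫ g, (v g - (⟪g, a⟫ : ℝ)) • g ∂(stdGaussian d) := by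
    conv_lhs => rw [← stein a hw_int]
    rw [← integral_sub hz_int hw_int]
    exact integral_congr_ae (Filter.Eventually.of_forall fun g => (sub_smul _ _ _).symm)
  rw [hkey]
  have hbound : ‖∫ g, (v g - (⟪g, a⟫ : ℝ)) • g ∂(stdGaussian d)‖
      ≤ ∫ g, τ * σ ^ 2 * ‖g‖ ^ 4 ∂(stdGaussian d) := by
    refine (norm_integral_le_integral_norm _).trans ?_
    have hu_int : Integrable (fun g : EuclideanSpace ℝ (Fin d) =>
        (v g - (⟪g, a⟫ : ℝ)) • g) (stdGaussian d) := by
      refine (hz_int.sub hw_int).congr (Filter.Eventually.of_forall fun g => ?_)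
      exact (sub_smul _ _ _).symm
    refine integral_mono hu_int.norm ((int_norm4.const_mul (τ * σ ^ 2)).congr
      (Filter.Eventually.of_forall fun g => by ring_nf)) fun g => ?_
    rw [norm_smul, Real.norm_eq_abs]
    calc |v g - (⟪g, a⟫ : ℝ)| * ‖g‖ ≤ (τ * σ ^ 2 * ‖g‖ ^ 3) * ‖g‖ :=
          mul_le_mul_of_nonneg_right (happrox θ g) (norm_nonneg g)
      _ = τ * σ ^ 2 * ‖g‖ ^ 4 := by ring
  refine hbound.trans ?_
  rw [integral_const_mul, mom_norm4]
  have hd' : (1:ℝ) ≤ (d : ℝ) := by exact_mod_cast hd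
  nlinarith [mul_pos hτ (pow_pos hσ 2), sq_nonneg ((d:ℝ) - 1)]
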